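/- arXiv:1701.00880 — 8 statements merged into one kernel-verified Lean document; each statement's English description precedes it below -/
import Mathlib

section
/- Let l be the number of cycles of ν (the number of orbits of the subgroup generated by ν acting on Fin n, counting fixed points). Then the quadratic form Q_ν over 𝔽₂ is equivalent to the orthogonal sum of (n − l) hyperbolic planes and a zero form of rank 2l: there is an isometric equivalence of quadratic forms between Q_ν and the form on ((Fin (n−l) → F) × (Fin (n−l) → F)) × (Fin (2*l) → F) given by ((a, b), c) ↦ ∑ i, a i * b i. -/
open Module Submodule LinearMap Finset

namespace Stmt1Aux

variable {n : ℕ}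

/-- The standard dot product bilinear form on `Fin n → ZMod 2`. -/
noncomputable def dotB : (Fin n → ZMod 2) →ₗ[ZMod 2] (Fin n → ZMod 2) →ₗ[ZMod 2] ZMod 2 :=
  LinearMap.mk₂ (ZMod 2) (fun a b => ∑ i, a i * b i)
    (by intros; simp [add_mul, Finset.sum_add_distrib])
    (by intros; simp [Finset.mul_sum, mul_assoc])
    (by intros; simp [mul_add, Finset.sum_add_distrib])
    (by intros; simp [Finset.mul_sum, mul_left_comm])

lemma dotB_apply (a b : Fin n → ZMod 2) : dotB a b = ∑ i, a i * b i := rfl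

lemma dotB_single_right (w : Fin n → ZMod 2) (i : Fin n) :
    dotB w (Pi.single i 1) = w i := by
  simp [dotB_apply, Pi.single_apply, mul_ite]

/-- The linear map `b ↦ b + b ∘ σ`. -/
noncomputable def Tmap (σ : Equiv.Perm (Fin n)) : (Fin n → ZMod 2) →ₗ[ZMod 2] (Fin n → ZMod 2) :=
  LinearMap.id + LinearMap.funLeft (ZMod 2) (ZMod 2) σ

lemma Tmap_apply (σ : Equiv.Perm (Fin n)) (b : Fin n → ZMod 2) (i : Fin n) :
    Tmap σ b i = b i + b (σ i) := rfl

/-- Adjointness of `Tmap σ` and `Tmap σ⁻¹` under the dot product. -/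
lemma dotB_adjoint (σ : Equiv.Perm (Fin n)) (a b : Fin n → ZMod 2) :
    dotB a (Tmap σ b) = dotB (Tmap σ⁻¹ a) b := by
  have h : ∑ i, a i * b (σ i) = ∑ i, a (σ⁻¹ i) * b i :=
    Fintype.sum_equiv σ (fun i => a i * b (σ i)) (fun i => a (σ⁻¹ i) * b i) fun x => by simp
  simp only [dotB_apply, Tmap_apply, mul_add, add_mul, Finset.sum_add_distrib, h]

/-- The kernel of `Tmap σ` has dimension the number of orbits of `σ`. -/
lemma finrank_ker_Tmap (σ : Equiv.Perm (Fin n)) :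
    finrank (ZMod 2) (ker (Tmap σ)) =
      Nat.card (Quotient (MulAction.orbitRel (Subgroup.zpowers σ) (Fin n))) := by
  classical
  set Qt := Quotient (MulAction.orbitRel (Subgroup.zpowers σ) (Fin n))
  letI : Fintype Qt := Fintype.ofFinite Qt
  let φ : (Qt → ZMod 2) →ₗ[ZMod 2] (Fin n → ZMod 2) :=
    LinearMap.funLeft (ZMod 2) (ZMod 2) (Quotient.mk _)
  have hinj : Function.Injective φ := by
    intro q₁ q₂ h
    funext x
    induction x using Quotient.ind
    exact congrFun h _
  have hrange : range φ = ker (Tmap σ) := by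
    ext w
    constructor
    · rintro ⟨q, rfl⟩
      rw [LinearMap.mem_ker]
      funext i
      have : (⟦σ i⟧ : Qt) = ⟦i⟧ := by
        refine Quotient.sound ?_
        exact ⟨⟨σ, Subgroup.mem_zpowers σ⟩, rfl⟩
      show q ⟦i⟧ + q ⟦σ i⟧ = 0
      rw [this, CharTwo.add_self_eq_zero]
    · intro hw
      have hinv : ∀ i, w (σ i) = w i := by
        intro i
        have h0 : w i + w (σ i) = 0 := congrFun hw i
        have := CharTwo.add_self_eq_zero (w i)
        calc w (σ i) = w i + (w i + w (σ i)) := by rw [← add_assoc, this, zero_add]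
        _ = w i := by rw [h0, add_zero]
      have hpow : ∀ m : ℕ, ∀ i, w ((σ ^ m) i) = w i := by
        intro m
        induction m with
        | zero => intro i; simp
        | succ m ih =>
          intro i
          rw [pow_succ']
          simp only [Equiv.Perm.mul_apply]
          rw [hinv, ih]
      have hzpow : ∀ k : ℤ, ∀ i, w ((σ ^ k) i) = w i := by
        intro k i
        cases k with
        | ofNat m => rw [Int.ofNat_eq_coe, zpow_natCast]; exact hpow m i
        | negSucc m =>
          rw [zpow_negSucc]
          have := hpow (m + 1) (((σ ^ (m + 1))⁻¹) i)
          rw [← Equiv.Perm.mul_apply, mul_inv_cancel, Equiv.Perm.one_apply] at this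
          exact this.symm
      have hconst : ∀ i j : Fin n, (MulAction.orbitRel (Subgroup.zpowers σ) (Fin n)).r i j →
          w i = w j := by
        intro i j hij
        obtain ⟨⟨g, hg⟩, hgi⟩ := hij
        obtain ⟨kz, rfl⟩ := Subgroup.mem_zpowers_iff.mp hg
        have : (σ ^ kz) j = i := hgi
        rw [← this, hzpow]
      refine ⟨Quotient.lift w hconst, ?_⟩
      funext i
      rfl
  have h1 : finrank (ZMod 2) (range φ) = finrank (ZMod 2) (Qt → ZMod 2) :=
    LinearMap.finrank_range_of_inj hinj
  rw [← hrange, h1, Module.finrank_fintype_fun_eq_card, Nat.card_eq_fintype_card]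

lemma single_sum {m : ℕ} (c : Fin m → ZMod 2) :
    (∑ j, c j • Pi.single j (1 : ZMod 2)) = c := by
  funext x
  rw [Finset.sum_apply]
  simp [Pi.single_apply, mul_ite]

end Stmt1Aux

set_option maxHeartbeats 1000000 in
/-- The quadratic form `Q_ν` over `𝔽₂` is equivalent to the orthogonal sum of
`n - l` hyperbolic planes and a zero form of rank `2 * l`, where `l` is the
number of cycles (orbits) of the permutation `ν`. -/
theorem stmt_1 (n : ℕ) (ν : Equiv.Perm (Fin n))
    (l : ℕ)
    (hl : l = Nat.card (Quotient (MulAction.orbitRel (Subgroup.zpowers ν) (Fin n))))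
    (Q : QuadraticForm (ZMod 2) ((Fin n → ZMod 2) × (Fin n → ZMod 2)))
    (hQ : ∀ a b : Fin n → ZMod 2, Q (a, b) = ∑ i, (a i * b i + a i * b (ν i)))
    (H : QuadraticForm (ZMod 2)
      (((Fin (n - l) → ZMod 2) × (Fin (n - l) → ZMod 2)) × (Fin (2 * l) → ZMod 2)))
    (hH : ∀ (a b : Fin (n - l) → ZMod 2) (c : Fin (2 * l) → ZMod 2),
      H ((a, b), c) = ∑ i, a i * b i) :
    QuadraticMap.Equivalent Q H := by
  classical
  open Stmt1Aux Module Submodule LinearMap in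
  have hV : finrank (ZMod 2) (Fin n → ZMod 2) = n := by
    simp [Module.finrank_fintype_fun_eq_card]
  set T := Stmt1Aux.Tmap ν with hT
  set T' := Stmt1Aux.Tmap ν⁻¹ with hT'
  have hkerT : finrank (ZMod 2) (LinearMap.ker T) = l := by
    rw [hl]; exact Stmt1Aux.finrank_ker_Tmap ν
  have hkerT' : finrank (ZMod 2) (LinearMap.ker T') = l := by
    rw [hl, Stmt1Aux.finrank_ker_Tmap ν⁻¹, Subgroup.zpowers_inv]
  have hln : l ≤ n := by
    have h := Submodule.finrank_le (LinearMap.ker T)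
    rw [hV] at h; omega
  have hrank : finrank (ZMod 2) (LinearMap.range T) = n - l := by
    have h := LinearMap.finrank_range_add_finrank_ker T
    rw [hV, hkerT] at h; omega
  obtain ⟨g⟩ : Nonempty (Basis (Fin (n - l)) (ZMod 2) (LinearMap.range T)) :=
    ⟨Module.finBasisOfFinrankEq _ _ hrank⟩
  choose f hf using fun j => LinearMap.mem_range.mp (g j).2
  set M : (Fin n → ZMod 2) →ₗ[ZMod 2] (Fin (n - l) → ZMod 2) :=
    LinearMap.pi (fun j => Stmt1Aux.dotB.flip ((g j : Fin n → ZMod 2))) with hM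
  have hMapp : ∀ a j, M a j = Stmt1Aux.dotB a (g j) := fun a j => rfl
  have hperp : ∀ a : Fin n → ZMod 2, (∀ j, Stmt1Aux.dotB a (g j) = 0) →
      ∀ w ∈ LinearMap.range T, Stmt1Aux.dotB a w = 0 := by
    intro a ha w hw
    have h1 : (⟨w, hw⟩ : LinearMap.range T) = ∑ j, g.repr ⟨w, hw⟩ j • g j :=
      (g.sum_repr _).symm
    have hw' : w = ∑ j, g.repr ⟨w, hw⟩ j • (g j : Fin n → ZMod 2) := by
      have h2 := congrArg (Subtype.val) h1
      simpa only [Submodule.coe_sum, Submodule.coe_smul] using h2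
    rw [hw', map_sum]
    simp [ha]
  have hkerM : LinearMap.ker M = LinearMap.ker T' := by
    ext a
    simp only [LinearMap.mem_ker]
    constructor
    · intro hMa
      have ha : ∀ j, Stmt1Aux.dotB a (g j) = 0 := fun j => by
        rw [← hMapp, hMa]; rfl
      funext i
      have h1 : Stmt1Aux.dotB (T' a) (Pi.single i 1) = T' a i :=
        Stmt1Aux.dotB_single_right _ i
      have h2 : Stmt1Aux.dotB a (T (Pi.single i 1)) = Stmt1Aux.dotB (T' a) (Pi.single i 1) :=
        Stmt1Aux.dotB_adjoint ν a _
      have h3 : Stmt1Aux.dotB a (T (Pi.single i 1)) = 0 :=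
        hperp a ha _ (LinearMap.mem_range_self T _)
      show T' a i = 0
      rw [← h1, ← h2, h3]
    · intro hT'a
      funext j
      show Stmt1Aux.dotB a (g j) = 0
      rw [← hf j, Stmt1Aux.dotB_adjoint ν, ← hT', hT'a, map_zero]
      rfl
  have hkerMl : finrank (ZMod 2) (LinearMap.ker M) = l := by rw [hkerM]; exact hkerT'
  have hMsurj : Function.Surjective M := by
    rw [← LinearMap.range_eq_top]
    apply Submodule.eq_top_of_finrank_eq
    have h := LinearMap.finrank_range_add_finrank_ker M
    rw [hV, hkerMl] at h
    have h2 : finrank (ZMod 2) (Fin (n - l) → ZMod 2) = n - l := by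
      simp [Module.finrank_fintype_fun_eq_card]
    rw [h2]; omega
  choose e he using fun j => hMsurj (Pi.single j 1)
  obtain ⟨ub⟩ : Nonempty (Basis (Fin l) (ZMod 2) (LinearMap.ker T')) :=
    ⟨Module.finBasisOfFinrankEq _ _ hkerT'⟩
  obtain ⟨kb⟩ : Nonempty (Basis (Fin l) (ZMod 2) (LinearMap.ker T)) :=
    ⟨Module.finBasisOfFinrankEq _ _ hkerT⟩
  set A : Fin (n - l) ⊕ Fin l → (Fin n → ZMod 2) :=
    Sum.elim e (fun i => (ub i : Fin n → ZMod 2)) with hA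
  set Bf : Fin (n - l) ⊕ Fin l → (Fin n → ZMod 2) :=
    Sum.elim f (fun i => (kb i : Fin n → ZMod 2)) with hB
  have subbasis_zero : ∀ {m : ℕ} (S : Submodule (ZMod 2) (Fin n → ZMod 2))
      (bb : Basis (Fin m) (ZMod 2) S) (c : Fin m → ZMod 2),
      ∑ i, c i • (bb i : Fin n → ZMod 2) = 0 → ∀ i, c i = 0 := by
    intro m S bb c hc i
    have hcoe : S.subtype (∑ i, c i • bb i) = 0 := by
      rw [map_sum]; simpa using hc
    have h0 : (∑ i, c i • bb i : S) = 0 := Subtype.ext (by simpa using hcoe)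
    exact Fintype.linearIndependent_iff.mp bb.linearIndependent c h0 i
  have hsingle_sum : ∀ (c : Fin (n - l) → ZMod 2), (∑ j, c j • Pi.single j (1 : ZMod 2)) = c :=
    fun c => Stmt1Aux.single_sum c
  have hindA : LinearIndependent (ZMod 2) A := by
    rw [Fintype.linearIndependent_iff]
    intro c hc
    have hMc : M (∑ x, c x • A x) = 0 := by rw [hc, map_zero]
    rw [map_sum] at hMc
    simp only [map_smul] at hMc
    rw [Fintype.sum_sum_type] at hMc
    have hMA1 : ∀ j, M (A (Sum.inl j)) = Pi.single j 1 := fun j => he j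
    have hMA2 : ∀ i, M (A (Sum.inr i)) = 0 := fun i => by
      have hmem : (ub i : Fin n → ZMod 2) ∈ LinearMap.ker M := by
        rw [hkerM]; exact (ub i).2
      exact hmem
    simp only [hMA1, hMA2, smul_zero, Finset.sum_const_zero, add_zero] at hMc
    rw [hsingle_sum] at hMc
    have hc1 : ∀ j, c (Sum.inl j) = 0 := fun j => congrFun hMc j
    have hc2sum : ∑ i, c (Sum.inr i) • (ub i : Fin n → ZMod 2) = 0 := by
      rw [Fintype.sum_sum_type] at hc
      simp only [hc1, zero_smul, Finset.sum_const_zero, zero_add] at hc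
      exact hc
    have hc2 := subbasis_zero _ ub _ hc2sum
    intro x
    cases x with
    | inl j => exact hc1 j
    | inr i => exact hc2 i
  have hindB : LinearIndependent (ZMod 2) Bf := by
    rw [Fintype.linearIndependent_iff]
    intro c hc
    have hTc : T (∑ x, c x • Bf x) = 0 := by rw [hc, map_zero]
    rw [map_sum] at hTc
    simp only [map_smul] at hTc
    rw [Fintype.sum_sum_type] at hTc
    have hTB1 : ∀ j, T (Bf (Sum.inl j)) = (g j : Fin n → ZMod 2) := fun j => hf j
    have hTB2 : ∀ i, T (Bf (Sum.inr i)) = 0 := fun i => by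
      have hmem : (kb i : Fin n → ZMod 2) ∈ LinearMap.ker T := (kb i).2
      exact hmem
    simp only [hTB1, hTB2, smul_zero, Finset.sum_const_zero, add_zero] at hTc
    have hc1 := subbasis_zero _ g _ hTc
    have hc2sum : ∑ i, c (Sum.inr i) • (kb i : Fin n → ZMod 2) = 0 := by
      rw [Fintype.sum_sum_type] at hc
      simp only [hc1, zero_smul, Finset.sum_const_zero, zero_add] at hc
      exact hc
    have hc2 := subbasis_zero _ kb _ hc2sum
    intro x
    cases x with
    | inl j => exact hc1 j
    | inr i => exact hc2 i
  have hcard : Fintype.card (Fin (n - l) ⊕ Fin l) = finrank (ZMod 2) (Fin n → ZMod 2) := by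
    simp [hV]; omega
  set bA : Basis (Fin (n - l) ⊕ Fin l) (ZMod 2) (Fin n → ZMod 2) :=
    Basis.mk hindA (hindA.span_eq_top_of_card_eq_finrank' hcard).ge with hbA
  set bB : Basis (Fin (n - l) ⊕ Fin l) (ZMod 2) (Fin n → ZMod 2) :=
    Basis.mk hindB (hindB.span_eq_top_of_card_eq_finrank' hcard).ge with hbB
  have hcoeA : ∀ x, bA x = A x := fun x => by rw [hbA, Basis.coe_mk]
  have hcoeB : ∀ x, bB x = Bf x := fun x => by rw [hbB, Basis.coe_mk]
  -- the key computation
  have key : ∀ a b : Fin n → ZMod 2,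
      Q (a, b) = ∑ j : Fin (n - l), bA.repr a (Sum.inl j) * bB.repr b (Sum.inl j) := by
    intro a b
    have hQd : Q (a, b) = Stmt1Aux.dotB a (T b) := by
      rw [hQ, Stmt1Aux.dotB_apply]
      refine Finset.sum_congr rfl fun i _ => ?_
      rw [hT, Stmt1Aux.Tmap_apply, mul_add]
    have step1 : T b = ∑ y, bB.repr b y • T (Bf y) := by
      conv_lhs => rw [← bB.sum_repr b]
      rw [map_sum]
      refine Finset.sum_congr rfl fun y _ => ?_
      rw [map_smul, hcoeB]
    have hTB1 : ∀ j, T (Bf (Sum.inl j)) = (g j : Fin n → ZMod 2) := fun j => hf j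
    have hTB2 : ∀ i, T (Bf (Sum.inr i)) = 0 := fun i => by
      have hmem : (kb i : Fin n → ZMod 2) ∈ LinearMap.ker T := (kb i).2
      exact hmem
    have step2 : Stmt1Aux.dotB a (T b) =
        ∑ j : Fin (n - l), bB.repr b (Sum.inl j) * Stmt1Aux.dotB a (g j) := by
      rw [step1, map_sum, Fintype.sum_sum_type]
      simp only [map_smul, hTB1, hTB2, map_zero, smul_zero, Finset.sum_const_zero, add_zero,
        smul_eq_mul]
    have step3 : ∀ j, Stmt1Aux.dotB a (g j) = bA.repr a (Sum.inl j) := by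
      intro j
      have ha : a = ∑ x, bA.repr a x • A x := by
        conv_lhs => rw [← bA.sum_repr a]
        refine Finset.sum_congr rfl fun x _ => by rw [hcoeA]
      calc Stmt1Aux.dotB a (g j) = M a j := (hMapp a j).symm
      _ = M (∑ x, bA.repr a x • A x) j := by rw [← ha]
      _ = bA.repr a (Sum.inl j) := by
          rw [map_sum]
          simp only [map_smul]
          rw [Fintype.sum_sum_type]
          have hMA1 : ∀ j', M (A (Sum.inl j')) = Pi.single j' 1 := fun j' => he j'
          have hMA2 : ∀ i, M (A (Sum.inr i)) = 0 := fun i => by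
            have hmem : (ub i : Fin n → ZMod 2) ∈ LinearMap.ker M := by
              rw [hkerM]; exact (ub i).2
            exact hmem
          simp only [hMA1, hMA2, smul_zero, Finset.sum_const_zero, add_zero]
          rw [hsingle_sum (fun j' => bA.repr a (Sum.inl j'))]
    rw [hQd, step2]
    refine Finset.sum_congr rfl fun j _ => ?_
    rw [step3, mul_comm]
  -- build the linear equivalence
  let E5 : ((Fin l → ZMod 2) × (Fin l → ZMod 2)) ≃ₗ[ZMod 2] (Fin (2 * l) → ZMod 2) :=
    (LinearEquiv.sumArrowLequivProdArrow (Fin l) (Fin l) (ZMod 2) (ZMod 2)).symm ≪≫ₗ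
      LinearEquiv.funCongrLeft (ZMod 2) (ZMod 2)
        ((finCongr (two_mul l)).trans finSumFinEquiv.symm)
  let E : ((Fin n → ZMod 2) × (Fin n → ZMod 2)) ≃ₗ[ZMod 2]
      (((Fin (n - l) → ZMod 2) × (Fin (n - l) → ZMod 2)) × (Fin (2 * l) → ZMod 2)) :=
    (bA.equivFun.prodCongr bB.equivFun) ≪≫ₗ
      ((LinearEquiv.sumArrowLequivProdArrow (Fin (n - l)) (Fin l) (ZMod 2) (ZMod 2)).prodCongr
        (LinearEquiv.sumArrowLequivProdArrow (Fin (n - l)) (Fin l) (ZMod 2) (ZMod 2))) ≪≫ₗ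
      (LinearEquiv.prodProdProdComm (ZMod 2) _ _ _ _) ≪≫ₗ
      ((LinearEquiv.refl (ZMod 2) (((Fin (n - l) → ZMod 2)) × (Fin (n - l) → ZMod 2))).prodCongr E5)
  have hE1 : ∀ a b : Fin n → ZMod 2,
      (E (a, b)).1.1 = fun j => bA.repr a (Sum.inl j) := by
    intro a b
    funext j
    rfl
  have hE2 : ∀ a b : Fin n → ZMod 2,
      (E (a, b)).1.2 = fun j => bB.repr b (Sum.inl j) := by
    intro a b
    funext j
    rfl
  refine ⟨{ E with map_app' := ?_ }⟩
  rintro ⟨a, b⟩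
  show H (E (a, b)) = Q (a, b)
  have hprod : E (a, b) = (((E (a, b)).1.1, (E (a, b)).1.2), (E (a, b)).2) := rfl
  rw [hprod, hE1, hE2, hH, key]
end

section
/- Let l be the number of cycles of ν (the number of orbits of the subgroup generated by ν acting on Fin n, counting fixed points). Then there is an 𝔽₂-algebra isomorphism CliffordAlgebra Q_ν ≃ (CliffordAlgebra H_{n−l}) ⊗[F] (ExteriorAlgebra F (Fin (2*l) → F)), i.e., the basepoint algebra Ω_ν is isomorphic to the tensor product of the Clifford algebra of (n − l) hyperbolic planes with the exterior algebra on a 2l-dimensional space. -/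
open scoped TensorProduct

namespace Stmt2TensorAux

open CliffordAlgebra


variable {M₁ M₂ : Type*} [AddCommGroup M₁] [AddCommGroup M₂]
  [Module (ZMod 2) M₁] [Module (ZMod 2) M₂]
  (Q₁ : QuadraticForm (ZMod 2) M₁) (Q₂ : QuadraticForm (ZMod 2) M₂)

noncomputable def toTensorCl : CliffordAlgebra (Q₁.prod Q₂) →ₐ[ZMod 2]
    CliffordAlgebra Q₁ ⊗[ZMod 2] CliffordAlgebra Q₂ :=
  CliffordAlgebra.lift _ ⟨
    (Algebra.TensorProduct.includeLeft.toLinearMap.comp ((ι Q₁).comp (LinearMap.fst _ _ _))) +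
      (Algebra.TensorProduct.includeRight.toLinearMap.comp ((ι Q₂).comp (LinearMap.snd _ _ _))),
    by
      rintro ⟨x, y⟩
      simp only [LinearMap.add_apply, LinearMap.comp_apply, LinearMap.fst_apply,
        LinearMap.snd_apply, AlgHom.toLinearMap_apply, Algebra.TensorProduct.includeLeft_apply,
        Algebra.TensorProduct.includeRight_apply]
      rw [add_mul, mul_add, mul_add]
      rw [Algebra.TensorProduct.tmul_mul_tmul, Algebra.TensorProduct.tmul_mul_tmul,
        Algebra.TensorProduct.tmul_mul_tmul, Algebra.TensorProduct.tmul_mul_tmul]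
      rw [ι_sq_scalar, ι_sq_scalar, mul_one, one_mul]
      have h2 : (ι Q₁ x ⊗ₜ[ZMod 2] ι Q₂ y) + (ι Q₁ x ⊗ₜ[ZMod 2] ι Q₂ y) = 0 := by
        rw [← two_smul (ZMod 2)]
        rw [show (2:ZMod 2) = 0 from rfl, zero_smul]
      rw [mul_one, one_mul, mul_one, one_mul]
      rw [show ∀ a b c d : CliffordAlgebra Q₁ ⊗[ZMod 2] CliffordAlgebra Q₂, a + b + (c + d) = (b + c) + (a + d) from fun a b c d => by abel, h2, zero_add]
      rw [QuadraticMap.prod_apply, map_add, Algebra.TensorProduct.algebraMap_apply,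
        Algebra.TensorProduct.algebraMap_apply]
      congr 1
      rw [Algebra.algebraMap_eq_smul_one, Algebra.algebraMap_eq_smul_one,
        TensorProduct.smul_tmul]⟩

theorem char2_commute_aux {A : Type*} [Ring A] [Algebra (ZMod 2) A] {a b : A}
    (h : a * b + b * a = 0) : Commute a b := by
  have : a * b = -(b * a) := eq_neg_of_add_eq_zero_left h
  rw [Commute, SemiconjBy, this, ← neg_one_smul (ZMod 2) (b * a),
    show (-1 : ZMod 2) = 1 by decide, one_smul]

theorem clifford_commute (x : CliffordAlgebra Q₁) (y : CliffordAlgebra Q₂) :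
    Commute (CliffordAlgebra.map (QuadraticMap.Isometry.inl Q₁ Q₂) x)
      (CliffordAlgebra.map (QuadraticMap.Isometry.inr Q₁ Q₂) y) := by
  induction x using CliffordAlgebra.induction with
  | algebraMap r => rw [AlgHom.commutes]; exact Algebra.commute_algebraMap_left r _
  | add a b ha hb => rw [map_add]; exact ha.add_left hb
  | mul a b ha hb => rw [map_mul]; exact ha.mul_left hb
  | ι m =>
    induction y using CliffordAlgebra.induction with
    | algebraMap r => rw [AlgHom.commutes]; exact Algebra.commute_algebraMap_right r _
    | add a b ha hb => rw [map_add]; exact ha.add_right hb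
    | mul a b ha hb => rw [map_mul]; exact ha.mul_right hb
    | ι m' =>
      rw [CliffordAlgebra.map_apply_ι, CliffordAlgebra.map_apply_ι]
      apply char2_commute_aux
      rw [CliffordAlgebra.ι_mul_ι_add_swap]
      have h0 : QuadraticMap.polar (Q₁.prod Q₂) (QuadraticMap.Isometry.inl Q₁ Q₂ m)
          (QuadraticMap.Isometry.inr Q₁ Q₂ m') = 0 := by
        rw [show ((QuadraticMap.Isometry.inl Q₁ Q₂) m : M₁ × M₂) = (m, 0) from rfl,
          show ((QuadraticMap.Isometry.inr Q₁ Q₂) m' : M₁ × M₂) = (0, m') from rfl,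
          QuadraticMap.polar_prod]
        simp [QuadraticMap.polar]
      rw [h0, map_zero]

noncomputable def ofTensorCl : CliffordAlgebra Q₁ ⊗[ZMod 2] CliffordAlgebra Q₂ →ₐ[ZMod 2]
    CliffordAlgebra (Q₁.prod Q₂) :=
  Algebra.TensorProduct.lift (CliffordAlgebra.map (QuadraticMap.Isometry.inl Q₁ Q₂))
    (CliffordAlgebra.map (QuadraticMap.Isometry.inr Q₁ Q₂)) (clifford_commute Q₁ Q₂)

theorem toTensorCl_ι (m : M₁ × M₂) : toTensorCl Q₁ Q₂ (ι _ m) =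
    ι Q₁ m.1 ⊗ₜ[ZMod 2] 1 + 1 ⊗ₜ[ZMod 2] ι Q₂ m.2 := by
  rw [toTensorCl, CliffordAlgebra.lift_ι_apply]; rfl

noncomputable def cliffordTensorEquiv : CliffordAlgebra (Q₁.prod Q₂) ≃ₐ[ZMod 2]
    CliffordAlgebra Q₁ ⊗[ZMod 2] CliffordAlgebra Q₂ := by
  refine AlgEquiv.ofAlgHom (toTensorCl Q₁ Q₂) (ofTensorCl Q₁ Q₂) ?_ ?_
  · apply Algebra.TensorProduct.ext
    · apply CliffordAlgebra.hom_ext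
      ext x
      simp [ofTensorCl, toTensorCl_ι,
        Algebra.TensorProduct.lift_tmul, CliffordAlgebra.map_apply_ι]
    · apply CliffordAlgebra.hom_ext
      ext y
      simp [ofTensorCl, toTensorCl_ι,
        Algebra.TensorProduct.lift_tmul, CliffordAlgebra.map_apply_ι]
  · apply CliffordAlgebra.hom_ext
    ext x
    all_goals simp [ofTensorCl, toTensorCl_ι,
      Algebra.TensorProduct.lift_tmul, CliffordAlgebra.map_apply_ι]

end Stmt2TensorAux


namespace Stmt2Aux

open Module

variable {n : ℕ} (ν : Equiv.Perm (Fin n))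

abbrev F := ZMod 2
abbrev A (n : ℕ) := Fin n → F

theorem F_add_eq_zero (x y : F) : x + y = 0 ↔ x = y := by revert x y; decide

/-- The pairing defining Q. -/
noncomputable def phi : A n →ₗ[F] A n →ₗ[F] F :=
  LinearMap.mk₂ F (fun a b => ∑ i, (a i * b i + a i * b (ν i)))
    (by intros; simp [add_mul, Finset.sum_add_distrib]; ring_nf)
    (by intros; simp [Finset.mul_sum, mul_add, Finset.sum_add_distrib, mul_assoc])
    (by intros; simp [mul_add, add_mul, Finset.sum_add_distrib]; ring_nf)
    (by intros; simp [Finset.mul_sum, mul_add, Finset.sum_add_distrib, mul_assoc, mul_left_comm])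

theorem phi_apply (a b : A n) : phi ν a b = ∑ i, (a i * b i + a i * b (ν i)) := rfl

/-- The fixed submodule: functions invariant under ν. -/
def S : Submodule F (A n) where
  carrier := {f | ∀ i, f (ν i) = f i}
  add_mem' := fun hf hg i => by simp [hf i, hg i]
  zero_mem' := fun i => rfl
  smul_mem' := fun c f hf i => by simp [hf i]

theorem mem_S {f : A n} : f ∈ S ν ↔ ∀ i, f (ν i) = f i := Iff.rfl

theorem sum_single_right (c : A n) (j : Fin n) :
    ∑ i, c i * (Pi.single j 1 : A n) i = c j := by
  rw [Finset.sum_eq_single j]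
  · simp
  · intro i _ hij
    simp [Pi.single_apply, hij]
  · simp

theorem phi_ker_left : LinearMap.ker (phi ν) = S ν := by
  ext a
  constructor
  · intro ha
    have key : ∀ j, a j + a (ν⁻¹ j) = 0 := by
      intro j
      have h1 := LinearMap.congr_fun (LinearMap.mem_ker.mp ha) (Pi.single j 1)
      rw [phi_apply, Finset.sum_add_distrib, sum_single_right] at h1
      have h2 : ∑ i, a i * (Pi.single j 1 : A n) (ν i) =
          ∑ i, a (ν⁻¹ i) * (Pi.single j 1 : A n) i := by
        rw [← Equiv.sum_comp ν (fun i => a (ν⁻¹ i) * (Pi.single j 1 : A n) i)]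
        exact Finset.sum_congr rfl fun i _ => by simp
      rw [h2, sum_single_right] at h1
      exact h1
    intro i
    have h3 := key (ν i)
    rw [F_add_eq_zero] at h3
    simpa using h3
  · intro ha
    rw [LinearMap.mem_ker]
    refine LinearMap.ext fun b => ?_
    rw [phi_apply, LinearMap.zero_apply]
    have h4 : ∀ i, a i * b i + a i * b (ν i) = (a i * b i) + (a (ν i) * b (ν i)) := by
      intro i; rw [ha i]
    rw [Finset.sum_congr rfl fun i _ => h4 i, Finset.sum_add_distrib,
      Equiv.sum_comp ν (fun i => a i * b i)]
    exact CharTwo.add_self_eq_zero _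

theorem phi_ker_right : LinearMap.ker (phi ν).flip = S ν := by
  ext b
  constructor
  · intro hb i
    have h1 := LinearMap.congr_fun (LinearMap.mem_ker.mp hb) (Pi.single i 1)
    rw [LinearMap.flip_apply, phi_apply, Finset.sum_add_distrib] at h1
    have h2 : ∑ j, (Pi.single i 1 : A n) j * b j = b i := by
      rw [Finset.sum_congr rfl fun j _ => mul_comm _ _]; exact sum_single_right b i
    have h3 : ∑ j, (Pi.single i 1 : A n) j * b (ν j) = b (ν i) := by
      rw [Finset.sum_congr rfl fun j _ => mul_comm _ _]
      exact sum_single_right (fun j => b (ν j)) i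
    rw [h2, h3] at h1
    exact ((F_add_eq_zero _ _).mp h1).symm
  · intro hb
    rw [LinearMap.mem_ker]
    refine LinearMap.ext fun a => ?_
    rw [LinearMap.flip_apply, phi_apply, LinearMap.zero_apply]
    have h4 : ∀ i, a i * b i + a i * b (ν i) = (0:F) := by
      intro i; rw [hb i, ← mul_add, CharTwo.add_self_eq_zero, mul_zero]
    rw [Finset.sum_congr rfl fun i _ => h4 i]
    simp

theorem S_pow (f : A n) (hf : f ∈ S ν) (k : ℕ) (i : Fin n) : f ((ν ^ k) i) = f i := by
  induction k with
  | zero => rfl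
  | succ m ih =>
    rw [pow_succ', Equiv.Perm.mul_apply, hf ((ν ^ m) i), ih]

theorem S_zpowers (f : A n) (hf : f ∈ S ν) (g : Equiv.Perm (Fin n))
    (hg : g ∈ Subgroup.zpowers ν) (i : Fin n) : f (g i) = f i := by
  obtain ⟨k, rfl⟩ := Subgroup.mem_zpowers_iff.mp hg
  induction k using Int.rec with
  | ofNat m => rw [Int.ofNat_eq_coe, zpow_natCast]; exact S_pow ν f hf m i
  | negSucc m =>
    rw [zpow_negSucc]
    have := S_pow ν f hf (m+1) ((ν ^ (m+1))⁻¹ i)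
    rw [show (ν ^ (m+1)) ((ν ^ (m+1))⁻¹ i) = i from Equiv.apply_symm_apply _ _] at this
    exact this.symm

abbrev Orb (ν : Equiv.Perm (Fin n)) :=
  Quotient (MulAction.orbitRel (Subgroup.zpowers ν) (Fin n))

theorem S_orbit_const (f : A n) (hf : f ∈ S ν) {i j : Fin n}
    (h : (MulAction.orbitRel (Subgroup.zpowers ν) (Fin n)).r i j) : f i = f j := by
  obtain ⟨⟨g, hg⟩, rfl⟩ := h
  exact S_zpowers ν f hf g hg j

noncomputable def S_equiv : S ν ≃ₗ[F] (Orb ν → F) where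
  toFun f q := f.1 q.out
  map_add' f g := rfl
  map_smul' c f := rfl
  invFun g := ⟨fun i => g ⟦i⟧, fun i => by
    refine congrArg g (Quotient.sound ?_)
    exact ⟨⟨ν, Subgroup.mem_zpowers ν⟩, rfl⟩⟩
  left_inv f := by
    ext i
    exact S_orbit_const ν f.1 f.2 (Quotient.mk_out i)
  right_inv g := by
    funext q
    induction q using Quotient.inductionOn with
    | h i => simp [Quotient.out_eq]

theorem finrank_S : finrank F (S ν) = Nat.card (Orb ν) := by
  have : Finite (Orb ν) := Quotient.finite _
  have : Fintype (Orb ν) := Fintype.ofFinite _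
  rw [LinearEquiv.finrank_eq (S_equiv ν), Module.finrank_fintype_fun_eq_card,
    Nat.card_eq_fintype_card]

set_option maxHeartbeats 1000000 in
theorem exists_isometry (l : ℕ) (hl : l = Nat.card (Orb ν))
    (Q : QuadraticForm F ((Fin n → F) × (Fin n → F)))
    (hQ : ∀ a b : Fin n → F, Q (a, b) = ∑ i, (a i * b i + a i * b (ν i)))
    (H : QuadraticForm F ((Fin (n - l) → F) × (Fin (n - l) → F)))
    (hH : ∀ a b : Fin (n - l) → F, H (a, b) = ∑ i, a i * b i) :
    Nonempty (QuadraticMap.IsometryEquiv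
      (H.prod (0 : QuadraticForm F (Fin (2 * l) → F))) Q) := by
  obtain ⟨C, hC⟩ := Submodule.exists_isCompl (S ν)
  have hK : finrank F (S ν) = l := by rw [finrank_S]; exact hl.symm
  have hA : finrank F (A n) = n := by
    rw [Module.finrank_fintype_fun_eq_card, Fintype.card_fin]
  have hCd : finrank F C = n - l := by
    have h := Submodule.finrank_add_eq_of_isCompl hC
    rw [hK, hA] at h
    omega
  -- the pairing restricted to C on both sides
  set θ : C →ₗ[F] Module.Dual F C := (((phi ν).domRestrict C).flip).domRestrict C with hθ
  have hθ_apply : ∀ (b c : C), θ b c = phi ν c b := fun b c => rfl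
  have hθ_inj : Function.Injective θ := by
    rw [← LinearMap.ker_eq_bot]
    rw [Submodule.eq_bot_iff]
    rintro b hb
    have hb0 : (b : A n) ∈ LinearMap.ker (phi ν).flip := by
      rw [LinearMap.mem_ker]
      refine LinearMap.ext fun a => ?_
      have ha : a ∈ S ν ⊔ C := by rw [hC.sup_eq_top]; trivial
      obtain ⟨s, hs, c, hc, rfl⟩ := Submodule.mem_sup.mp ha
      have hs0 : phi ν s = 0 := by
        have : s ∈ LinearMap.ker (phi ν) := by rw [phi_ker_left]; exact hs
        exact this
      have hc0 : phi ν c (b : A n) = 0 := by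
        have := LinearMap.congr_fun (LinearMap.mem_ker.mp hb) ⟨c, hc⟩
        exact this
      simp [map_add, hs0, hc0]
    rw [phi_ker_right] at hb0
    have : (b : A n) ∈ S ν ⊓ C := ⟨hb0, b.2⟩
    rw [hC.inf_eq_bot] at this
    exact Subtype.ext this
  have hθdim : finrank F C = finrank F (Module.Dual F C) :=
    (Subspace.dual_finrank_eq).symm
  set θe : C ≃ₗ[F] Module.Dual F C := θ.linearEquivOfInjective hθ_inj hθdim with hθe
  set uB : Basis (Fin (n - l)) F C := (Module.finBasis F C).reindex (finCongr hCd) with huB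
  set kB : Basis (Fin l) F (S ν) := (Module.finBasis F (S ν)).reindex (finCongr hK) with hkB
  set eA : ((Fin (n - l) → F) × (Fin l → F)) ≃ₗ[F] A n :=
    (LinearEquiv.prodCongr uB.equivFun.symm kB.equivFun.symm).trans
      (Submodule.prodEquivOfIsCompl C (S ν) hC.symm) with heA
  set eB : ((Fin (n - l) → F) × (Fin l → F)) ≃ₗ[F] A n :=
    (LinearEquiv.prodCongr ((uB.dualBasis.equivFun.symm.trans θe.symm)) kB.equivFun.symm).trans
      (Submodule.prodEquivOfIsCompl C (S ν) hC.symm) with heB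
  have key : ∀ (a b : Fin (n - l) → F) (c d : Fin l → F),
      phi ν (eA (a, c)) (eB (b, d)) = ∑ i, a i * b i := by
    intro a b c d
    have h1 : eA (a, c) = ↑(uB.equivFun.symm a) + ↑(kB.equivFun.symm c) := by rw [heA]; rfl
    have h2 : eB (b, d) = ↑(θe.symm (uB.dualBasis.equivFun.symm b)) + ↑(kB.equivFun.symm d) := by rw [heB]; rfl
    have hs1 : phi ν ↑(kB.equivFun.symm c) = 0 := by
      have hm : ((kB.equivFun.symm c : S ν) : A n) ∈ LinearMap.ker (phi ν) := by
        rw [phi_ker_left]; exact (kB.equivFun.symm c).2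
      exact hm
    have hs2 : ∀ x : A n, phi ν x ↑(kB.equivFun.symm d) = 0 := by
      intro x
      have hm : ((kB.equivFun.symm d : S ν) : A n) ∈ LinearMap.ker (phi ν).flip := by
        rw [phi_ker_right]; exact (kB.equivFun.symm d).2
      exact LinearMap.congr_fun (LinearMap.mem_ker.mp hm) x
    rw [h1, h2]
    simp only [map_add, LinearMap.add_apply, hs1, hs2, LinearMap.zero_apply, add_zero, zero_add]
    -- main term
    set w := uB.dualBasis.equivFun.symm b with hw0
    have hw : θ (θe.symm w) = w := by
      rw [show θ (θe.symm w) = θe (θe.symm w) from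
        (LinearMap.linearEquivOfInjective_apply hθ_inj hθdim _).symm]
      exact θe.apply_symm_apply w
    have h3 : phi ν ↑(uB.equivFun.symm a) ↑(θe.symm w) = w (uB.equivFun.symm a) := by
      have h4 := hθ_apply (θe.symm w) (uB.equivFun.symm a)
      rw [hw] at h4
      exact h4.symm
    rw [h3, hw0, Basis.equivFun_symm_apply]
    simp only [LinearMap.sum_apply, LinearMap.smul_apply, Basis.coe_dualBasis,
      Basis.coord_apply, smul_eq_mul]
    have hra : ∀ j, uB.repr (uB.equivFun.symm a) j = a j := by
      intro j
      rw [← Basis.equivFun_apply, LinearEquiv.apply_symm_apply]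
    exact Finset.sum_congr rfl fun j _ => by rw [hra j, mul_comm]
  -- assemble the big linear equivalence
  set split : (Fin (2 * l) → F) ≃ₗ[F] ((Fin l → F) × (Fin l → F)) :=
    (LinearEquiv.funCongrLeft F F (finSumFinEquiv.trans (finCongr (two_mul l).symm))).trans
      (LinearEquiv.sumArrowLequivProdArrow _ _ F F) with hsplit
  set E : (((Fin (n - l) → F) × (Fin (n - l) → F)) × (Fin (2 * l) → F)) ≃ₗ[F]
      ((Fin n → F) × (Fin n → F)) :=
    (LinearEquiv.prodCongr (LinearEquiv.refl F ((Fin (n - l) → F) × (Fin (n - l) → F))) split).trans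
      ((LinearEquiv.prodProdProdComm F _ _ _ _).trans (LinearEquiv.prodCongr eA eB)) with hE
  refine ⟨⟨E, ?_⟩⟩
  rintro ⟨⟨a, b⟩, c⟩
  have hEx : E ((a, b), c) = (eA (a, (split c).1), eB (b, (split c).2)) := by rw [hE]; rfl
  show Q (E ((a, b), c)) = _
  rw [hEx]
  rw [show Q (eA (a, (split c).1), eB (b, (split c).2)) =
    phi ν (eA (a, (split c).1)) (eB (b, (split c).2)) from hQ _ _]
  rw [key]
  rw [QuadraticMap.prod_apply, hH]
  simp

end Stmt2Aux

/-- The basepoint algebra `Ω_ν = CliffordAlgebra Q_ν` over `𝔽₂` is isomorphic to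
the tensor product of the Clifford algebra of `n - l` hyperbolic planes with the
exterior algebra on a `2l`-dimensional space, where `l` is the number of cycles
(orbits) of the permutation `ν`. -/
theorem stmt_2 (n : ℕ) (ν : Equiv.Perm (Fin n))
    (l : ℕ)
    (hl : l = Nat.card (Quotient (MulAction.orbitRel (Subgroup.zpowers ν) (Fin n))))
    (Q : QuadraticForm (ZMod 2) ((Fin n → ZMod 2) × (Fin n → ZMod 2)))
    (hQ : ∀ a b : Fin n → ZMod 2, Q (a, b) = ∑ i, (a i * b i + a i * b (ν i)))
    (H : QuadraticForm (ZMod 2) ((Fin (n - l) → ZMod 2) × (Fin (n - l) → ZMod 2)))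
    (hH : ∀ a b : Fin (n - l) → ZMod 2, H (a, b) = ∑ i, a i * b i) :
    Nonempty (CliffordAlgebra Q ≃ₐ[ZMod 2]
      (CliffordAlgebra H ⊗[ZMod 2] ExteriorAlgebra (ZMod 2) (Fin (2 * l) → ZMod 2))) := by
  obtain ⟨iso⟩ := Stmt2Aux.exists_isometry ν l hl Q hQ H hH
  exact ⟨((CliffordAlgebra.equivOfIsometry iso).symm).trans
    (Stmt2TensorAux.cliffordTensorEquiv H (0 : QuadraticForm (ZMod 2) (Fin (2 * l) → ZMod 2)))⟩
end

section
/- For every vector v ∈ V_n, the element ι(v) lies in the center of the Clifford algebra CliffordAlgebra Q_ν if and only if Σ_ν(v) = v, where Σ_ν is the shift map induced by ν. -/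
open CliffordAlgebra

section Aux

variable {n : ℕ} (ν : Equiv.Perm (Fin n))

abbrev Vn (n : ℕ) := (Fin n → ZMod 2) × (Fin n → ZMod 2)

def myB : LinearMap.BilinForm (ZMod 2) (Vn n) :=
  LinearMap.mk₂ (ZMod 2)
    (fun v w => ∑ i, (v.1 i * w.2 i + v.1 i * w.2 (ν i)))
    (by intros; simp [add_mul, Finset.sum_add_distrib]; ring)
    (by intros; simp [Finset.mul_sum]
        exact Finset.sum_congr rfl fun i _ => by ring)
    (by intros; simp [mul_add, Finset.sum_add_distrib]; ring)
    (by intros; simp [Finset.mul_sum]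
        exact Finset.sum_congr rfl fun i _ => by ring)

set_option synthInstance.maxHeartbeats 1000000 in
lemma nontriv (Q : QuadraticForm (ZMod 2) (Vn n))
    (hQ : ∀ a b : Fin n → ZMod 2, Q (a, b) = ∑ i, (a i * b i + a i * b (ν i))) :
    Nontrivial (CliffordAlgebra Q) := by
  have h : (myB ν).toQuadraticMap = (0 : QuadraticForm (ZMod 2) (Vn n)) - Q := by
    ext v
    obtain ⟨a, b⟩ := v
    have h2 : ∀ x : ZMod 2, x = 0 - x := by decide
    simpa [LinearMap.BilinMap.toQuadraticMap_apply, myB, hQ] using h2 _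
  haveI h0 : Nontrivial (CliffordAlgebra (0 : QuadraticForm (ZMod 2) (Vn n))) :=
    inferInstanceAs (Nontrivial (ExteriorAlgebra (ZMod 2) (Vn n)))
  exact (changeFormEquiv h).symm.injective.nontrivial

end Aux

/-- For a vector `v` in `V_n`, the element `ι v` is central in the Clifford
algebra of `Q_ν` if and only if `v` is fixed by the shift map
`Σ_ν (a, b) = (a ∘ ν⁻¹, b ∘ ν⁻¹)`. -/
theorem stmt_3 (n : ℕ) (ν : Equiv.Perm (Fin n))
    (Q : QuadraticForm (ZMod 2) ((Fin n → ZMod 2) × (Fin n → ZMod 2)))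
    (hQ : ∀ a b : Fin n → ZMod 2, Q (a, b) = ∑ i, (a i * b i + a i * b (ν i)))
    (v : (Fin n → ZMod 2) × (Fin n → ZMod 2)) :
    ι Q v ∈ Subalgebra.center (ZMod 2) (CliffordAlgebra Q) ↔
      (v.1 ∘ ⇑ν.symm, v.2 ∘ ⇑ν.symm) = v := by
  have := nontriv ν Q hQ
  obtain ⟨a, b⟩ := v
  have hchar : ∀ x : CliffordAlgebra Q, x + x = 0 := by
    intro x
    have h1 : ((1 : ZMod 2) + 1) • x = x + x := by rw [add_smul, one_smul]
    have h11 : (1 + 1 : ZMod 2) = 0 := by decide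
    rw [← h1, h11, zero_smul]
  have hz2 : ∀ x y : ZMod 2, x + y = 0 ↔ x = y := by decide
  have hpolar : ∀ c d : Fin n → ZMod 2, QuadraticMap.polar Q (a, b) (c, d) =
      ∑ i, (a i * d i + a i * d (ν i) + c i * b i + c i * b (ν i)) := by
    intro c d
    have hadd : ((a, b) + (c, d) : (Fin n → ZMod 2) × (Fin n → ZMod 2)) = (a + c, b + d) := rfl
    rw [QuadraticMap.polar, hadd, hQ, hQ, hQ, ← Finset.sum_sub_distrib, ← Finset.sum_sub_distrib]
    refine Finset.sum_congr rfl fun i _ => ?_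
    simp only [Pi.add_apply]
    ring
  have hmain : (∀ w, QuadraticMap.polar Q (a, b) w = 0) ↔
      ((a ∘ ⇑ν.symm, b ∘ ⇑ν.symm) = (a, b)) := by
    constructor
    · intro h
      rw [Prod.ext_iff]
      constructor
      · funext j
        set δ : Fin n → ZMod 2 := Pi.single j 1 with hδ
        have hj := h ((0, δ) : (Fin n → ZMod 2) × (Fin n → ZMod 2))
        rw [hpolar] at hj
        simp only [Pi.zero_apply, zero_mul, mul_zero, add_zero, zero_add] at hj
        have e1 : ∑ i, (a i * δ i + a i * δ (ν i)) = a j + a (ν.symm j) := by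
          rw [Finset.sum_add_distrib]
          congr 1
          · simp [hδ, Pi.single_apply, mul_ite, Finset.sum_ite_eq']
          · have h5 := Equiv.sum_comp ν (fun i => a (ν.symm i) * δ i)
            simp only [Equiv.symm_apply_apply] at h5
            rw [h5]
            simp [hδ, Pi.single_apply, mul_ite, Finset.sum_ite_eq']
        rw [e1] at hj
        simp only [Function.comp_apply]
        exact ((hz2 _ _).mp hj).symm
      · funext j
        set δ : Fin n → ZMod 2 := Pi.single (ν.symm j) 1 with hδ
        have hj := h ((δ, 0) : (Fin n → ZMod 2) × (Fin n → ZMod 2))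
        rw [hpolar] at hj
        simp only [Pi.zero_apply, zero_mul, mul_zero, add_zero, zero_add] at hj
        have e1 : ∑ i, (δ i * b i + δ i * b (ν i)) = b (ν.symm j) + b j := by
          rw [Finset.sum_add_distrib]
          congr 1
          · simp [hδ, Pi.single_apply, ite_mul, Finset.sum_ite_eq]
          · simp [hδ, Pi.single_apply, ite_mul, Finset.sum_ite_eq]
        rw [e1] at hj
        exact (hz2 _ _).mp hj
    · intro h w
      obtain ⟨c, d⟩ := w
      rw [Prod.mk.injEq] at h
      obtain ⟨ha, hb⟩ := h
      have ha' : ∀ i, a (ν.symm i) = a i := fun i => congrFun ha i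
      have hb' : ∀ i, b (ν i) = b i := by
        intro i
        have h3 := congrFun hb (ν i)
        simpa using h3.symm
      rw [hpolar]
      have e2 : ∑ i, a i * d (ν i) = ∑ i, a i * d i := by
        have h5 := Equiv.sum_comp ν (fun i => a (ν.symm i) * d i)
        simp only [Equiv.symm_apply_apply] at h5
        rw [h5]
        exact Finset.sum_congr rfl fun i _ => by rw [ha' i]
      calc ∑ i, (a i * d i + a i * d (ν i) + c i * b i + c i * b (ν i))
          = (∑ i, a i * d i) + (∑ i, a i * d (ν i)) + ((∑ i, c i * b i)
            + (∑ i, c i * b (ν i))) := by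
            rw [Finset.sum_add_distrib, Finset.sum_add_distrib, Finset.sum_add_distrib]
            ring
        _ = (∑ i, a i * d i) + (∑ i, a i * d i) + ((∑ i, c i * b i)
            + (∑ i, c i * b i)) := by
            have e3 : ∑ i, c i * b (ν i) = ∑ i, c i * b i :=
              Finset.sum_congr rfl fun i _ => by rw [hb' i]
            rw [e2, e3]
        _ = 0 := by
            have h4 : ∀ x y : ZMod 2, x + x + (y + y) = 0 := by decide
            apply h4
  rw [← hmain, Subalgebra.mem_center_iff]
  constructor
  · intro h w
    have hc := h (ι Q w)
    have hs := ι_mul_ι_add_swap (Q := Q) (a, b) w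
    rw [← hc] at hs
    rw [hchar] at hs
    have hinj : Function.Injective (algebraMap (ZMod 2) (CliffordAlgebra Q)) :=
      RingHom.injective _
    exact hinj (hs.symm.trans (map_zero _).symm)
  · intro h g
    induction g using CliffordAlgebra.induction with
    | algebraMap r => exact Algebra.commutes r _
    | ι w =>
      have hs := ι_mul_ι_add_swap (Q := Q) (a, b) w
      rw [h w, map_zero] at hs
      exact add_left_cancel (hs.trans (hchar _).symm)
    | mul g₁ g₂ h₁ h₂ => rw [mul_assoc, h₂, ← mul_assoc, h₁, mul_assoc]
    | add g₁ g₂ h₁ h₂ => rw [add_mul, h₁, h₂, mul_add]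
end

section
/- If M is finite-dimensional, then dim M = 2 · dim(range(w ∘ z)); in particular dim M is even and dim(range(w ∘ z)) = dim(range(z ∘ w)) = (dim M)/2. -/
open Module

/-- For a finite-dimensional `Ω₁`-module `M` over `𝔽₂`,
`dim M = 2 · dim (range (w ∘ z))`; in particular `dim M` is even and
`dim (range (w ∘ z)) = dim (range (z ∘ w)) = dim M / 2`. -/
theorem stmt_8 (M : Type*) [AddCommGroup M] [Module (ZMod 2) M]
    [FiniteDimensional (ZMod 2) M]
    (w z : M →ₗ[ZMod 2] M)
    (hw : w ∘ₗ w = 0) (hz : z ∘ₗ z = 0)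
    (hwz : w ∘ₗ z + z ∘ₗ w = LinearMap.id) :
    finrank (ZMod 2) M = 2 * finrank (ZMod 2) ↥(LinearMap.range (w ∘ₗ z)) ∧
    Even (finrank (ZMod 2) M) ∧
    finrank (ZMod 2) ↥(LinearMap.range (w ∘ₗ z)) = finrank (ZMod 2) M / 2 ∧
    finrank (ZMod 2) ↥(LinearMap.range (z ∘ₗ w)) = finrank (ZMod 2) M / 2 := by
  have hw' : ∀ x, w (w x) = 0 := fun x => congrFun (congrArg DFunLike.coe hw) x
  have hz' : ∀ x, z (z x) = 0 := fun x => congrFun (congrArg DFunLike.coe hz) x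
  have hwz' : ∀ x : M, w (z x) + z (w x) = x :=
    fun x => congrFun (congrArg DFunLike.coe hwz) x
  -- z (w (z x)) = z x
  have hzwz : ∀ x, z (w (z x)) = z x := by
    intro x
    have := hwz' (z x)
    rwa [hz' x, map_zero, zero_add] at this
  have hwzw : ∀ x, w (z (w x)) = w x := by
    intro x
    have := hwz' (w x)
    rwa [hw', map_zero, add_zero] at this
  -- linear equiv between range (w∘z) and range (z∘w)
  have hEF : finrank (ZMod 2) ↥(LinearMap.range (w ∘ₗ z)) =
      finrank (ZMod 2) ↥(LinearMap.range (z ∘ₗ w)) := by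
    refine LinearEquiv.finrank_eq ?_
    refine
      { toFun := fun x => ⟨z x.1, by
          obtain ⟨y, hy⟩ := x.2
          exact ⟨z y, by simp only [LinearMap.comp_apply] at hy ⊢; rw [← hy, hzwz]⟩⟩
        map_add' := by intro a b; ext; simp
        map_smul' := by intro c a; ext; simp
        invFun := fun x => ⟨w x.1, by
          obtain ⟨y, hy⟩ := x.2
          exact ⟨w y, by simp only [LinearMap.comp_apply] at hy ⊢; rw [← hy, hwzw]⟩⟩
        left_inv := by
          rintro ⟨x, y, hy⟩
          ext
          simp only [LinearMap.comp_apply] at hy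
          simp only [← hy, hzwz]
        right_inv := by
          rintro ⟨x, y, hy⟩
          ext
          simp only [LinearMap.comp_apply] at hy
          simp only [← hy, hwzw] }
  -- ker (w∘z) = range (z∘w)
  have hker : LinearMap.ker (w ∘ₗ z) = LinearMap.range (z ∘ₗ w) := by
    ext x
    simp only [LinearMap.mem_ker, LinearMap.mem_range, LinearMap.comp_apply]
    constructor
    · intro h
      have := hwz' x
      rw [h, zero_add] at this
      exact ⟨x, this⟩
    · rintro ⟨y, rfl⟩
      rw [hz', map_zero]
  have hrn := LinearMap.finrank_range_add_finrank_ker (w ∘ₗ z)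
  rw [hker, ← hEF] at hrn
  refine ⟨by omega, ⟨finrank (ZMod 2) ↥(LinearMap.range (w ∘ₗ z)), by omega⟩, by omega, by rw [← hEF]; omega⟩
end

section
/- Suppose S : M →ₗ[F] M is a compatible endomorphism, i.e., S ∘ (w ∘ z) + (w ∘ z) ∘ S = w + z. If u ∈ M satisfies S u = u and (w ∘ z) u = 0, then u = 0; likewise, if u ∈ M satisfies S u = u and (z ∘ w) u = 0, then u = 0. (The proof uses that (w + z) ∘ (w + z) = id, so w + z is invertible.) -/
/-- For an `Ω₁`-module `M` over `𝔽₂` and a compatible endomorphism `S`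
(i.e. `S ∘ wz + wz ∘ S = w + z`): any vector fixed by `S` and killed by `wz`
(resp. by `zw`) vanishes. -/
theorem stmt_10 (M : Type*) [AddCommGroup M] [Module (ZMod 2) M]
    (w z : M →ₗ[ZMod 2] M)
    (hw : w ∘ₗ w = 0) (hz : z ∘ₗ z = 0)
    (hwz : w ∘ₗ z + z ∘ₗ w = LinearMap.id)
    (S : M →ₗ[ZMod 2] M)
    (hS : S ∘ₗ (w ∘ₗ z) + (w ∘ₗ z) ∘ₗ S = w + z) :
    (∀ u : M, S u = u → (w ∘ₗ z) u = 0 → u = 0) ∧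
    (∀ u : M, S u = u → (z ∘ₗ w) u = 0 → u = 0) := by
  have two : ∀ v : M, v + v = 0 := by
    intro v
    have : (2 : ZMod 2) • v = 0 := by
      rw [show (2 : ZMod 2) = 0 from rfl, zero_smul]
    rwa [two_smul] at this
  -- (w+z) ∘ (w+z) = id
  have hsq : ∀ v : M, (w + z) ((w + z) v) = v := by
    intro v
    have h1 : (w ∘ₗ w) v = 0 := by rw [hw]; rfl
    have h2 : (z ∘ₗ z) v = 0 := by rw [hz]; rfl
    have h3 : (w ∘ₗ z + z ∘ₗ w) v = v := by rw [hwz]; rfl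
    simp only [LinearMap.add_apply, LinearMap.comp_apply] at h1 h2 h3 ⊢
    simp only [map_add]
    calc w (w v) + w (z v) + (z (w v) + z (z v))
        = (w (z v) + z (w v)) + (w (w v) + z (z v)) := by abel
      _ = v := by rw [h1, h2, h3]; simp
  have inj : ∀ v : M, (w + z) v = 0 → v = 0 := by
    intro v hv
    have := hsq v
    rw [hv, map_zero] at this
    exact this.symm
  constructor
  · intro u hSu hu
    apply inj
    have h := congrArg (fun f => f u) hS
    simp only [LinearMap.add_apply, LinearMap.comp_apply] at h hu ⊢
    rw [hu, hSu, hu, map_zero] at h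
    simpa using h.symm
  · intro u hSu hu
    apply inj
    have h := congrArg (fun f => f u) hS
    have h3 : (w ∘ₗ z) u + (z ∘ₗ w) u = u := by
      have := congrArg (fun f => f u) hwz
      simpa using this
    rw [hu, add_zero] at h3
    simp only [LinearMap.add_apply, LinearMap.comp_apply] at h h3 ⊢
    rw [hSu, h3, hSu, two u] at h
    exact h.symm
end

section
/- Suppose M is finite-dimensional, S : M →ₗ[F] M is a compatible endomorphism (S ∘ (w ∘ z) + (w ∘ z) ∘ S = w + z), and U is a subspace of M such that S u = u for every u ∈ U and dim M = 2 · dim U. Then M is the internal direct sum of the images (w ∘ z)(U) and (z ∘ w)(U): these two subspaces intersect trivially and span M. -/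
open Module

/-- For a finite-dimensional `Ω₁`-module `M` over `𝔽₂`, a compatible
endomorphism `S` (with `S ∘ wz + wz ∘ S = w + z`), and a subspace `U` of
`S`-fixed vectors with `dim M = 2 · dim U`, the module `M` is the internal
direct sum of `(w ∘ z)(U)` and `(z ∘ w)(U)`. -/
theorem stmt_11 (M : Type*) [AddCommGroup M] [Module (ZMod 2) M]
    [FiniteDimensional (ZMod 2) M]
    (w z : M →ₗ[ZMod 2] M)
    (hw : w ∘ₗ w = 0) (hz : z ∘ₗ z = 0)
    (hwz : w ∘ₗ z + z ∘ₗ w = LinearMap.id)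
    (S : M →ₗ[ZMod 2] M)
    (hS : S ∘ₗ (w ∘ₗ z) + (w ∘ₗ z) ∘ₗ S = w + z)
    (U : Submodule (ZMod 2) M)
    (hU : ∀ u ∈ U, S u = u)
    (hdim : finrank (ZMod 2) M = 2 * finrank (ZMod 2) U) :
    U.map (w ∘ₗ z) ⊓ U.map (z ∘ₗ w) = ⊥ ∧
    U.map (w ∘ₗ z) ⊔ U.map (z ∘ₗ w) = ⊤ := by
  set e := w ∘ₗ z with he
  set f := z ∘ₗ w with hf
  -- char 2
  have hchar : ∀ m : M, m + m = 0 := fun m => by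
    have : (2 : ZMod 2) • m = m + m := two_smul _ m
    rw [← this, show (2 : ZMod 2) = 0 by decide, zero_smul]
  -- pointwise consequences
  have hww : ∀ m : M, w (w m) = 0 := fun m => by
    have := LinearMap.congr_fun hw m; simpa using this
  have hzz : ∀ m : M, z (z m) = 0 := fun m => by
    have := LinearMap.congr_fun hz m; simpa using this
  have hid : ∀ m : M, e m + f m = m := fun m => by
    have := LinearMap.congr_fun hwz m; simpa using this
  have hSid : ∀ m : M, S (e m) + e (S m) = w m + z m := fun m => by
    have := LinearMap.congr_fun hS m; simpa using this
  have hef : ∀ m : M, e (f m) = 0 := fun m => by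
    show w (z (z (w m))) = 0
    rw [hzz, map_zero]
  have hfe : ∀ m : M, f (e m) = 0 := fun m => by
    show z (w (w (z m))) = 0
    rw [hww, map_zero]
  have hee : ∀ m : M, e (e m) = e m := fun m => by
    have := congrArg e (hid m)
    rwa [map_add, hef, add_zero] at this
  -- injectivity of e on U
  have hinje : ∀ u ∈ U, e u = 0 → u = 0 := by
    intro u hu h0
    have h1 := hSid u
    rw [h0, map_zero, hU u hu, h0, zero_add] at h1
    -- 0 = w u + z u, so z u = w u
    have hzw : z u = w u := by
      have h2 : w u + (w u + z u) = w u := by rw [← h1, add_zero]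
      rwa [← add_assoc, hchar, zero_add] at h2
    have hfu : f u = 0 := by show z (w u) = 0; rw [← hzw, hzz]
    have := hid u
    rw [h0, hfu, add_zero] at this
    exact this.symm
  have hinjf : ∀ u ∈ U, f u = 0 → u = 0 := by
    intro u hu h0
    have heu : e u = u := by have := hid u; rwa [h0, add_zero] at this
    have h1 := hSid u
    rw [heu, hU u hu, heu, hchar u] at h1
    have hzw : z u = w u := by
      have h2 : w u + (w u + z u) = w u := by rw [← h1, add_zero]
      rwa [← add_assoc, hchar, zero_add] at h2
    have heu0 : e u = 0 := by show w (z u) = 0; rw [hzw, hww]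
    rw [heu0] at heu
    exact heu.symm
  -- intersection trivial
  have hinf : U.map e ⊓ U.map f = ⊥ := by
    rw [Submodule.eq_bot_iff]
    rintro x ⟨⟨u, hu, rfl⟩, v, hv, hvx⟩
    have h1 : e (e u) = e u := hee u
    have h2 : e (e u) = 0 := by rw [← hvx, hef]
    rw [h2] at h1; exact h1.symm
  refine ⟨hinf, ?_⟩
  -- dimensions
  have hre : finrank (ZMod 2) (U.map e) = finrank (ZMod 2) U := by
    rw [show U.map e = LinearMap.range (e ∘ₗ U.subtype) by
      rw [LinearMap.range_comp, Submodule.range_subtype]]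
    apply LinearMap.finrank_range_of_inj
    rw [← LinearMap.ker_eq_bot, Submodule.eq_bot_iff]
    rintro ⟨u, hu⟩ h0
    exact Subtype.ext (hinje u hu (by simpa using h0))
  have hrf : finrank (ZMod 2) (U.map f) = finrank (ZMod 2) U := by
    rw [show U.map f = LinearMap.range (f ∘ₗ U.subtype) by
      rw [LinearMap.range_comp, Submodule.range_subtype]]
    apply LinearMap.finrank_range_of_inj
    rw [← LinearMap.ker_eq_bot, Submodule.eq_bot_iff]
    rintro ⟨u, hu⟩ h0
    exact Subtype.ext (hinjf u hu (by simpa using h0))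
  have hsum := Submodule.finrank_sup_add_finrank_inf_eq (U.map e) (U.map f)
  rw [hinf, finrank_bot, add_zero, hre, hrf] at hsum
  apply Submodule.eq_top_of_finrank_eq
  rw [hsum, hdim]; ring
end

section
/- Let V, M, M' be finite-dimensional 𝔽₂-vector spaces, where M carries endomorphisms w, z with w∘w = 0, z∘z = 0, w∘z + z∘w = id, and M' carries endomorphisms w', z' with w'∘w' = 0, z'∘z' = 0, w'∘z' + z'∘w' = id. Let k : V →ₗ M and f : M →ₗ M' be linear maps, and S : M →ₗ M, S' : M' →ₗ M' endomorphisms, satisfying: (i) f ∘ w = w' ∘ f and f ∘ z = z' ∘ f; (ii) S(k(x)) = k(x) for all x ∈ V; (iii) S' ∘ f + f ∘ S = f; (iv) S ∘ (w ∘ z) + (w ∘ z) ∘ S = w + z and S' ∘ (w' ∘ z') + (w' ∘ z') ∘ S' = w' + z'; (v) M = (w ∘ z)(range k) + (z ∘ w)(range k). Then rank f = 2 · rank (f ∘ k), and moreover ker f is the internal direct sum of (w ∘ z)(K) and (z ∘ w)(K), where K := ker f ⊓ range k. -/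
open Module

private lemma char2_add_self {M : Type*} [AddCommGroup M] [Module (ZMod 2) M] (a : M) :
    a + a = 0 := by
  have : ((2 : ZMod 2)) • a = a + a := two_smul _ a
  rw [show ((2:ZMod 2)) = 0 by decide, zero_smul] at this
  exact this.symm

private lemma char2_cancel {M : Type*} [AddCommGroup M] [Module (ZMod 2) M]
    {a b c : M} (h : a + b = c) : b = c + a := by
  rw [← h, add_comm a b, add_assoc, char2_add_self, add_zero]

/-- injectivity key: if S y = 0 and w (z y) = 0 then y = 0. -/
private lemma key {M : Type*} [AddCommGroup M] [Module (ZMod 2) M]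
    (w z S : M →ₗ[ZMod 2] M)
    (hw : ∀ x, w (w x) = 0) (hz : ∀ x, z (z x) = 0)
    (hwz : ∀ x, w (z x) + z (w x) = x)
    (hS : ∀ x, S (w (z x)) + w (z (S x)) = w x + z x)
    (y : M) (hSy : S y = 0) (hy : w (z y) = 0) : y = 0 := by
  have hy' : z (w y) = y := by
    have := hwz y; rw [hy, zero_add] at this; exact this
  have h1 := hS y
  rw [hy, map_zero, hSy, map_zero, map_zero, add_zero] at h1
  have hzy : z y = 0 := by rw [← hy']; exact hz (w y)
  have hwy : w y = 0 := by
    have := h1.symm; rw [hzy, add_zero] at this; exact this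
  rw [← hy', hwy, map_zero]

/-- the two images under the complementary idempotents intersect trivially -/
private lemma disj_gen {M : Type*} [AddCommGroup M] [Module (ZMod 2) M]
    (w z : M →ₗ[ZMod 2] M)
    (hw : ∀ x, w (w x) = 0) (hz : ∀ x, z (z x) = 0)
    (hwz : ∀ x, w (z x) + z (w x) = x)
    (A B : Submodule (ZMod 2) M) :
    A.map (w ∘ₗ z) ⊓ B.map (z ∘ₗ w) = ⊥ := by
  have idem1 : ∀ x : M, w (z (w (z x))) = w (z x) := fun x => by
    have h1 : z (w (z x)) = z x := by
      have := hwz (z x); rw [hz x, map_zero, zero_add] at this; exact this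
    rw [h1]
  have idem2 : ∀ x : M, z (w (z (w x))) = z (w x) := fun x => by
    have h1 : w (z (w x)) = w x := by
      have := hwz (w x)
      rw [show z (w (w x)) = 0 by rw [hw x, map_zero], add_zero] at this; exact this
    rw [h1]
  rw [Submodule.eq_bot_iff]
  rintro x ⟨⟨a, _, ha⟩, ⟨b, _, hb⟩⟩
  simp only [LinearMap.comp_apply] at ha hb
  have h1 : w (z x) = x := by rw [← ha, idem1]
  have h2 : z (w x) = x := by rw [← hb, idem2]
  have h3 : w (z (z (w x))) = 0 := by rw [hz (w x), map_zero]
  rw [h2, h1] at h3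
  exact h3

private lemma finrank_map_of_inj {M M' : Type*} [AddCommGroup M] [Module (ZMod 2) M]
    [AddCommGroup M'] [Module (ZMod 2) M'] [FiniteDimensional (ZMod 2) M]
    (g : M →ₗ[ZMod 2] M') (p : Submodule (ZMod 2) M)
    (h : ∀ x ∈ p, g x = 0 → x = 0) :
    finrank (ZMod 2) (p.map g) = finrank (ZMod 2) p := by
  let g' := g ∘ₗ p.subtype
  have hr : LinearMap.range g' = p.map g := by
    rw [LinearMap.range_comp, Submodule.range_subtype]
  have hk : LinearMap.ker g' = ⊥ := by
    rw [LinearMap.ker_eq_bot']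
    intro m hm
    exact Subtype.ext (h m m.2 hm)
  have := LinearMap.finrank_range_add_finrank_ker g'
  rw [hr, hk, finrank_bot, add_zero] at this
  exact this

/-- The rank-doubling lemma: given `Ω₁`-modules `M, M'` over `𝔽₂` with
compatible endomorphisms `S, S'`, an `Ω₁`-equivariant map `f : M → M'`, and a
map `k : V → M` whose image is fixed by `S` and generates `M` over `Ω₁`, one has
`rank f = 2 · rank (f ∘ k)`, and `ker f` is the internal direct sum of
`(w ∘ z)(K)` and `(z ∘ w)(K)` where `K = ker f ⊓ range k`. -/
theorem stmt_12 (V M M' : Type*)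
    [AddCommGroup V] [Module (ZMod 2) V] [FiniteDimensional (ZMod 2) V]
    [AddCommGroup M] [Module (ZMod 2) M] [FiniteDimensional (ZMod 2) M]
    [AddCommGroup M'] [Module (ZMod 2) M'] [FiniteDimensional (ZMod 2) M']
    (w z : M →ₗ[ZMod 2] M)
    (hw : w ∘ₗ w = 0) (hz : z ∘ₗ z = 0)
    (hwz : w ∘ₗ z + z ∘ₗ w = LinearMap.id)
    (w' z' : M' →ₗ[ZMod 2] M')
    (hw' : w' ∘ₗ w' = 0) (hz' : z' ∘ₗ z' = 0)
    (hwz' : w' ∘ₗ z' + z' ∘ₗ w' = LinearMap.id)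
    (k : V →ₗ[ZMod 2] M) (f : M →ₗ[ZMod 2] M')
    (S : M →ₗ[ZMod 2] M) (S' : M' →ₗ[ZMod 2] M')
    (hfw : f ∘ₗ w = w' ∘ₗ f) (hfz : f ∘ₗ z = z' ∘ₗ f)
    (hSk : ∀ x : V, S (k x) = k x)
    (hS'f : S' ∘ₗ f + f ∘ₗ S = f)
    (hS : S ∘ₗ (w ∘ₗ z) + (w ∘ₗ z) ∘ₗ S = w + z)
    (hS' : S' ∘ₗ (w' ∘ₗ z') + (w' ∘ₗ z') ∘ₗ S' = w' + z')
    (hgen : (LinearMap.range k).map (w ∘ₗ z) ⊔ (LinearMap.range k).map (z ∘ₗ w) = ⊤) :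
    finrank (ZMod 2) ↥(LinearMap.range f)
        = 2 * finrank (ZMod 2) ↥(LinearMap.range (f ∘ₗ k)) ∧
    (LinearMap.ker f ⊓ LinearMap.range k).map (w ∘ₗ z)
        ⊓ (LinearMap.ker f ⊓ LinearMap.range k).map (z ∘ₗ w) = ⊥ ∧
    (LinearMap.ker f ⊓ LinearMap.range k).map (w ∘ₗ z)
        ⊔ (LinearMap.ker f ⊓ LinearMap.range k).map (z ∘ₗ w) = LinearMap.ker f := by
  -- pointwise facts
  have pw : ∀ x, w (w x) = 0 := fun x => LinearMap.congr_fun hw x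
  have pz : ∀ x, z (z x) = 0 := fun x => LinearMap.congr_fun hz x
  have pwz : ∀ x, w (z x) + z (w x) = x := fun x => by
    have := LinearMap.congr_fun hwz x
    simpa using this
  have pw' : ∀ x, w' (w' x) = 0 := fun x => LinearMap.congr_fun hw' x
  have pz' : ∀ x, z' (z' x) = 0 := fun x => LinearMap.congr_fun hz' x
  have pwz' : ∀ x, w' (z' x) + z' (w' x) = x := fun x => by
    have := LinearMap.congr_fun hwz' x
    simpa using this
  have pS' : ∀ x, S' (w' (z' x)) + w' (z' (S' x)) = w' x + z' x := fun x => by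
    have := LinearMap.congr_fun hS' x
    simpa using this
  -- swapped version of pS'
  have pS'sw : ∀ x, S' (z' (w' x)) + z' (w' (S' x)) = z' x + w' x := fun x => by
    have e1 : z' (w' x) = x + w' (z' x) := char2_cancel (pwz' x)
    have e2 : z' (w' (S' x)) = S' x + w' (z' (S' x)) := char2_cancel (pwz' (S' x))
    calc S' (z' (w' x)) + z' (w' (S' x))
        = S' (x + w' (z' x)) + (S' x + w' (z' (S' x))) := by rw [e1, e2]
      _ = (S' x + S' x) + (S' (w' (z' x)) + w' (z' (S' x))) := by rw [map_add]; abel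
      _ = z' x + w' x := by rw [char2_add_self (S' x), pS' x, zero_add, add_comm]
  have pfw : ∀ x, f (w x) = w' (f x) := fun x => LinearMap.congr_fun hfw x
  have pfz : ∀ x, f (z x) = z' (f x) := fun x => LinearMap.congr_fun hfz x
  -- f(range k) ⊆ ker S'
  have hfkS' : ∀ x : V, S' (f (k x)) = 0 := fun x => by
    have h := LinearMap.congr_fun hS'f (k x)
    simp only [LinearMap.add_apply, LinearMap.comp_apply, hSk x] at h
    exact add_right_cancel (b := f (k x)) (c := (0 : M'))
      (show S' (f (k x)) + f (k x) = 0 + f (k x) by rw [zero_add]; exact h)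
  set P := LinearMap.range k with hP
  set Q := P.map f with hQ
  -- injectivity of the idempotents on Q = f(range k)
  have inj1 : ∀ y ∈ Q, w' (z' y) = 0 → y = 0 := by
    rintro y ⟨m, ⟨x, rfl⟩, rfl⟩ h0
    exact key w' z' S' pw' pz' pwz' pS' _ (hfkS' x) h0
  have inj2 : ∀ y ∈ Q, z' (w' y) = 0 → y = 0 := by
    rintro y ⟨m, ⟨x, rfl⟩, rfl⟩ h0
    exact key z' w' S' pz' pw' (fun u => by rw [add_comm]; exact pwz' u) pS'sw _ (hfkS' x) h0
  have hQeq : LinearMap.range (f ∘ₗ k) = Q := by rw [LinearMap.range_comp]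
  -- range f = Q.map (w'z') ⊔ Q.map (z'w')
  have hrange : LinearMap.range f = Q.map (w' ∘ₗ z') ⊔ Q.map (z' ∘ₗ w') := by
    have h0 : LinearMap.range f = (P.map (w ∘ₗ z) ⊔ P.map (z ∘ₗ w)).map f := by
      rw [hgen, Submodule.map_top]
    have c1 : f ∘ₗ (w ∘ₗ z) = (w' ∘ₗ z') ∘ₗ f := by
      ext x; simp only [LinearMap.comp_apply]; rw [pfw, pfz]
    have c2 : f ∘ₗ (z ∘ₗ w) = (z' ∘ₗ w') ∘ₗ f := by
      ext x; simp only [LinearMap.comp_apply]; rw [pfz, pfw]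
    rw [h0, Submodule.map_sup, ← Submodule.map_comp, ← Submodule.map_comp, c1, c2]
    simp only [Submodule.map_comp, hQ]
  have hdisj' : Q.map (w' ∘ₗ z') ⊓ Q.map (z' ∘ₗ w') = ⊥ :=
    disj_gen w' z' pw' pz' pwz' Q Q
  constructor
  · -- rank statement
    have e1 : finrank (ZMod 2) (Q.map (w' ∘ₗ z')) = finrank (ZMod 2) Q :=
      finrank_map_of_inj _ Q (fun x hx h0 => inj1 x hx (by simpa using h0))
    have e2 : finrank (ZMod 2) (Q.map (z' ∘ₗ w')) = finrank (ZMod 2) Q :=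
      finrank_map_of_inj _ Q (fun x hx h0 => inj2 x hx (by simpa using h0))
    have hsum := Submodule.finrank_sup_add_finrank_inf_eq
      (Q.map (w' ∘ₗ z')) (Q.map (z' ∘ₗ w'))
    rw [hdisj', finrank_bot, add_zero, e1, e2] at hsum
    rw [hrange, hQeq, hsum]
    ring
  set K := LinearMap.ker f ⊓ P with hK
  refine ⟨disj_gen w z pw pz pwz K K, ?_⟩
  apply le_antisymm
  · apply sup_le
    · rintro x ⟨m, ⟨hm, _⟩, rfl⟩
      simp only [LinearMap.mem_ker] at hm ⊢
      simp only [LinearMap.comp_apply]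
      rw [pfw, pfz, hm, map_zero, map_zero]
    · rintro x ⟨m, ⟨hm, _⟩, rfl⟩
      simp only [LinearMap.mem_ker] at hm ⊢
      simp only [LinearMap.comp_apply]
      rw [pfz, pfw, hm, map_zero, map_zero]
  · intro m hm
    have hmker : f m = 0 := hm
    have hmem : m ∈ P.map (w ∘ₗ z) ⊔ P.map (z ∘ₗ w) := by rw [hgen]; trivial
    obtain ⟨a, ha, b, hb, hab⟩ := Submodule.mem_sup.mp hmem
    obtain ⟨p, ⟨x₁, rfl⟩, rfl⟩ := ha
    obtain ⟨q, ⟨x₂, rfl⟩, rfl⟩ := hb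
    simp only [LinearMap.comp_apply] at hab
    set u := f (k x₁) with hu
    set v := f (k x₂) with hv
    have hfm : w' (z' u) + z' (w' v) = 0 := by
      rw [← hmker, ← hab, map_add, pfw, pfz, pfz, pfw]
    -- apply w' ∘ z' : kills second term, idempotent on first
    have idem1 : w' (z' (w' (z' u))) = w' (z' u) := by
      have h1 : z' (w' (z' u)) = z' u := by
        have := pwz' (z' u); rw [pz' u, map_zero, zero_add] at this; exact this
      rw [h1]
    have idem2 : z' (w' (z' (w' v))) = z' (w' v) := by
      have h1 : w' (z' (w' v)) = w' v := by
        have := pwz' (w' v)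
        rw [show z' (w' (w' v)) = 0 by rw [pw' v, map_zero], add_zero] at this; exact this
      rw [h1]
    have h1 : w' (z' u) = 0 := by
      have := congrArg (fun t => w' (z' t)) hfm
      simp only [map_add, map_zero] at this
      rw [idem1] at this
      rw [show w' (z' (z' (w' v))) = 0 by rw [pz' (w' v), map_zero],
        add_zero] at this
      exact this
    have h2 : z' (w' v) = 0 := by
      have := congrArg (fun t => z' (w' t)) hfm
      simp only [map_add, map_zero] at this
      rw [idem2] at this
      rw [show z' (w' (w' (z' u))) = 0 by rw [pw' (z' u), map_zero],
        zero_add] at this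
      exact this
    have hu0 : u = 0 := inj1 u ⟨k x₁, ⟨x₁, rfl⟩, rfl⟩ h1
    have hv0 : v = 0 := inj2 v ⟨k x₂, ⟨x₂, rfl⟩, rfl⟩ h2
    have hk1 : k x₁ ∈ K := ⟨hu0, ⟨x₁, rfl⟩⟩
    have hk2 : k x₂ ∈ K := ⟨hv0, ⟨x₂, rfl⟩⟩
    rw [← hab]
    exact Submodule.add_mem_sup ⟨k x₁, hk1, rfl⟩ ⟨k x₂, hk2, rfl⟩
end

section
/- Let (A δ), (B δ), (C δ), for δ ∈ ℤ, be families of finite-dimensional vector spaces over 𝔽₂, with linear maps g δ : A δ → B δ, h δ : B δ → C δ, f δ : C δ → A (δ−1) forming a long exact sequence: for every δ, range (f (δ+1)) = ker (g δ), range (g δ) = ker (h δ), and range (h δ) = ker (f δ). Suppose there exists N : ℤ such that A δ = 0, B δ = 0, C δ = 0 for all δ ≥ N, and that for every δ one has 2 · dim (A δ) = dim (B (δ+1)) + dim (B δ) and dim (C δ) = dim (B δ). Then for every δ: 2 · rank (g δ) = dim (B δ), 2 · rank (h δ) = dim (B δ), and 2 · rank (f δ) = dim (B δ). -/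
open Module

/-- The graded rank computation for a long exact sequence
`⋯ → A δ → B δ → C δ → A (δ-1) → ⋯` of finite-dimensional `𝔽₂`-vector spaces
(here the connecting maps are reindexed as `f δ : C (δ+1) → A δ`): if the
spaces vanish in all degrees `δ ≥ N`, `2 · dim (A δ) = dim (B (δ+1)) + dim (B δ)`
and `dim (C δ) = dim (B δ)` for all `δ`, then every map in the sequence has rank
equal to half the dimension of the corresponding `B`-term. -/
theorem stmt_13 (A B C : ℤ → Type*)
    [∀ δ, AddCommGroup (A δ)] [∀ δ, Module (ZMod 2) (A δ)]
    [∀ δ, FiniteDimensional (ZMod 2) (A δ)]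
    [∀ δ, AddCommGroup (B δ)] [∀ δ, Module (ZMod 2) (B δ)]
    [∀ δ, FiniteDimensional (ZMod 2) (B δ)]
    [∀ δ, AddCommGroup (C δ)] [∀ δ, Module (ZMod 2) (C δ)]
    [∀ δ, FiniteDimensional (ZMod 2) (C δ)]
    (g : ∀ δ : ℤ, A δ →ₗ[ZMod 2] B δ)
    (h : ∀ δ : ℤ, B δ →ₗ[ZMod 2] C δ)
    (f : ∀ δ : ℤ, C (δ + 1) →ₗ[ZMod 2] A δ)
    (hexA : ∀ δ : ℤ, LinearMap.range (f δ) = LinearMap.ker (g δ))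
    (hexB : ∀ δ : ℤ, LinearMap.range (g δ) = LinearMap.ker (h δ))
    (hexC : ∀ δ : ℤ, LinearMap.range (h (δ + 1)) = LinearMap.ker (f δ))
    (hvanish : ∃ N : ℤ, ∀ δ ≥ N,
      finrank (ZMod 2) (A δ) = 0 ∧ finrank (ZMod 2) (B δ) = 0 ∧
        finrank (ZMod 2) (C δ) = 0)
    (hdimA : ∀ δ : ℤ,
      2 * finrank (ZMod 2) (A δ) = finrank (ZMod 2) (B (δ + 1)) + finrank (ZMod 2) (B δ))
    (hdimC : ∀ δ : ℤ, finrank (ZMod 2) (C δ) = finrank (ZMod 2) (B δ)) :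
    ∀ δ : ℤ,
      2 * finrank (ZMod 2) ↥(LinearMap.range (g δ)) = finrank (ZMod 2) (B δ) ∧
      2 * finrank (ZMod 2) ↥(LinearMap.range (h δ)) = finrank (ZMod 2) (B δ) ∧
      2 * finrank (ZMod 2) ↥(LinearMap.range (f δ)) = finrank (ZMod 2) (B (δ + 1)) := by
  obtain ⟨N, hN⟩ := hvanish
  set rg : ℤ → ℕ := fun δ => finrank (ZMod 2) ↥(LinearMap.range (g δ)) with hrg
  set rh : ℤ → ℕ := fun δ => finrank (ZMod 2) ↥(LinearMap.range (h δ)) with hrh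
  set rf : ℤ → ℕ := fun δ => finrank (ZMod 2) ↥(LinearMap.range (f δ)) with hrf
  -- rank-nullity facts
  have rn1 : ∀ δ : ℤ, finrank (ZMod 2) (A δ) = rg δ + rf δ := by
    intro δ
    have := LinearMap.finrank_range_add_finrank_ker (g δ)
    rw [← hexA δ] at this
    simpa [hrg, hrf] using this.symm
  have rn2 : ∀ δ : ℤ, finrank (ZMod 2) (B δ) = rh δ + rg δ := by
    intro δ
    have := LinearMap.finrank_range_add_finrank_ker (h δ)
    rw [← hexB δ] at this
    simpa [hrg, hrh, Nat.add_comm] using this.symm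
  have rn3 : ∀ δ : ℤ, finrank (ZMod 2) (C (δ + 1)) = rf δ + rh (δ + 1) := by
    intro δ
    have := LinearMap.finrank_range_add_finrank_ker (f δ)
    rw [← hexC δ] at this
    simpa [hrf, hrh] using this.symm
  -- the defect D δ = 2 rh δ - b δ satisfies D (δ+1) = -D δ
  have key : ∀ δ : ℤ, (2 * rh (δ + 1) : ℤ) - finrank (ZMod 2) (B (δ + 1))
      = -((2 * rh δ : ℤ) - finrank (ZMod 2) (B δ)) := by
    intro δ
    have h1 := rn1 δ
    have h2 := rn2 δ
    have h2' := rn2 (δ + 1)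
    have h3 := rn3 δ
    have h4 := hdimA δ
    have h5 := hdimC (δ + 1)
    omega
  have base : ∀ δ ≥ N, (2 * rh δ : ℤ) - finrank (ZMod 2) (B δ) = 0 := by
    intro δ hδ
    have hb := (hN δ hδ).2.1
    have hc := (hN δ hδ).2.2
    have hle : rh δ ≤ finrank (ZMod 2) (C δ) := Submodule.finrank_le _
    omega
  have Dzero : ∀ δ : ℤ, (2 * rh δ : ℤ) - finrank (ZMod 2) (B δ) = 0 := by
    have claim : ∀ n : ℕ, ∀ δ : ℤ, δ = N - n →
        (2 * rh δ : ℤ) - finrank (ZMod 2) (B δ) = 0 := by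
      intro n
      induction n with
      | zero =>
        intro δ hδ
        have : δ = N := by omega
        subst this; exact base δ le_rfl
      | succ k ih =>
        intro δ hδ
        have h1 := key δ
        have h2 := ih (δ + 1) (by push_cast at hδ ⊢; omega)
        omega
    intro δ
    by_cases hδ : N ≤ δ
    · exact base δ hδ
    · exact claim (N - δ).toNat δ (by omega)
  intro δ
  have h2 := rn2 δ
  have h2' := rn2 (δ + 1)
  have h3 := rn3 δ
  have h5 := hdimC (δ + 1)
  have d1 := Dzero δ
  have d2 := Dzero (δ + 1)
  refine ⟨?_, ?_, ?_⟩
  · show 2 * rg δ = _; omega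
  · show 2 * rh δ = _; omega
  · show 2 * rf δ = _; omega
end
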